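/- Let ρ and ρ̂ be states on ℂ^{d_A} such that the support of N_B(ρ) is contained in the support of N_B(ρ̂) and the support of N_E(ρ) is contained in the support of N_E(ρ̂). For λ ∈ [0,1] set ρ̄_λ = λρ + (1-λ)ρ̂ and define f(λ) = [λ D(N_B(ρ)‖N_B(ρ̄_λ)) + (1-λ) D(N_B(ρ̂)‖N_B(ρ̄_λ))] - [λ D(N_E(ρ)‖N_E(ρ̄_λ)) + (1-λ) D(N_E(ρ̂)‖N_E(ρ̄_λ))]. Then f(0) = 0 and f is right-differentiable at λ = 0 with derivative f′(0) = D(N_B(ρ)‖N_B(ρ̂)) − D(N_E(ρ)‖N_E(ρ̂)). -/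

import Mathlib

open Matrix BigOperators
open scoped ComplexOrder

noncomputable section

/-- Matrix logarithm via the spectral decomposition (junk value `0` off Hermitian matrices;
eigenvalue `0` contributes `Real.log 0 = 0`). -/
def matLog {n : Type*} [Fintype n] [DecidableEq n] (ρ : Matrix n n ℂ) : Matrix n n ℂ :=
  if h : ρ.IsHermitian then
    (h.eigenvectorUnitary : Matrix n n ℂ) *
      Matrix.diagonal (fun i => (Real.log (h.eigenvalues i) : ℂ)) *
      (h.eigenvectorUnitary : Matrix n n ℂ)ᴴ
  else 0

/-- Von Neumann entropy `H(ρ) = -Tr[ρ log ρ]`. -/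
def vnEntropy {n : Type*} [Fintype n] [DecidableEq n] (ρ : Matrix n n ℂ) : ℝ :=
  - (ρ * matLog ρ).trace.re

/-- Quantum relative entropy `D(ρ‖σ) = Tr[ρ (log ρ - log σ)]`. -/
def relEntropy {n : Type*} [Fintype n] [DecidableEq n] (ρ σ : Matrix n n ℂ) : ℝ :=
  (ρ * (matLog ρ - matLog σ)).trace.re

/-- A state: positive semidefinite with unit trace. -/
def IsState {n : Type*} [Fintype n] (ρ : Matrix n n ℂ) : Prop :=
  ρ.PosSemidef ∧ ρ.trace = 1

/-- A pure (rank-one) state `|ψ⟩⟨ψ|` for a unit vector `ψ`. -/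
def IsPureState {n : Type*} [Fintype n] (ρ : Matrix n n ℂ) : Prop :=
  ∃ ψ : n → ℂ, (∑ i, Complex.normSq (ψ i)) = 1 ∧ ρ = Matrix.vecMulVec ψ (star ψ)

/-- Support (range) inclusion for matrices. -/
def suppLE {n : Type*} [Fintype n] [DecidableEq n] (ρ σ : Matrix n n ℂ) : Prop :=
  LinearMap.range (Matrix.toLin' ρ) ≤ LinearMap.range (Matrix.toLin' σ)

/-- Partial trace over the second tensor factor. -/
def ptraceSnd {α β : Type*} [Fintype β] (M : Matrix (α × β) (α × β) ℂ) : Matrix α α ℂ :=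
  Matrix.of fun i j => ∑ k, M (i, k) (j, k)

/-- Partial trace over the first tensor factor. -/
def ptraceFst {α β : Type*} [Fintype α] (M : Matrix (α × β) (α × β) ℂ) : Matrix β β ℂ :=
  Matrix.of fun i j => ∑ k, M (k, i) (k, j)

variable {dA dB dE : ℕ}

/-- The channel `N_B(ρ) = Tr_E[U ρ U†]`. -/
def chanB (U : Matrix (Fin dB × Fin dE) (Fin dA) ℂ) (ρ : Matrix (Fin dA) (Fin dA) ℂ) :
    Matrix (Fin dB) (Fin dB) ℂ := ptraceSnd (U * ρ * Uᴴ)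

/-- The complementary channel `N_E(ρ) = Tr_B[U ρ U†]`. -/
def chanE (U : Matrix (Fin dB × Fin dE) (Fin dA) ℂ) (ρ : Matrix (Fin dA) (Fin dA) ℂ) :
    Matrix (Fin dE) (Fin dE) ℂ := ptraceFst (U * ρ * Uᴴ)

/-- Coherent information `I_c(ρ) = H(N_B(ρ)) - H(N_E(ρ))`. -/
def cohInfo (U : Matrix (Fin dB × Fin dE) (Fin dA) ℂ) (ρ : Matrix (Fin dA) (Fin dA) ℂ) : ℝ :=
  vnEntropy (chanB U ρ) - vnEntropy (chanE U ρ)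

/-- Holevo quantity of the ensemble `(p, σ)` with respect to the channel `N`. -/
def holevo {ι inn out : Type*} [Fintype ι] [Fintype out] [DecidableEq out]
    [AddCommMonoid (Matrix inn inn ℂ)]
    (N : Matrix inn inn ℂ → Matrix out out ℂ)
    (p : ι → ℝ) (σ : ι → Matrix inn inn ℂ) : ℝ :=
  vnEntropy (N (∑ u, (p u : ℂ) • σ u)) - ∑ u, p u * vnEntropy (N (σ u))

/-- A finite ensemble: a probability distribution together with states. -/
def IsEnsemble {ι inn : Type*} [Fintype ι] [Fintype inn]
    (p : ι → ℝ) (σ : ι → Matrix inn inn ℂ) : Prop :=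
  (∀ u, 0 ≤ p u) ∧ (∑ u, p u = 1) ∧ (∀ u, IsState (σ u))

/-- `Q^{(1)}`: optimized coherent information. -/
def Q1 (U : Matrix (Fin dB × Fin dE) (Fin dA) ℂ) : ℝ :=
  sSup { r | ∃ ρ, IsState ρ ∧ r = cohInfo U ρ }

/-- `C_p^{(1)}`: optimized difference of Holevo quantities. -/
def Cp1 (U : Matrix (Fin dB × Fin dE) (Fin dA) ℂ) : ℝ :=
  sSup { r | ∃ (m : ℕ) (p : Fin m → ℝ) (σ : Fin m → Matrix (Fin dA) (Fin dA) ℂ),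
    IsEnsemble p σ ∧ r = holevo (chanB U) p σ - holevo (chanE U) p σ }


namespace Aux

variable {n : Type*} [Fintype n] [DecidableEq n]

theorem trace_mul_conj_diag (M V : Matrix n n ℂ) (d : n → ℂ) :
    (M * (V * Matrix.diagonal d * Vᴴ)).trace = ∑ j, d j * ((Vᴴ * M * V) j j) := by
  rw [show M * (V * Matrix.diagonal d * Vᴴ) = M * V * Matrix.diagonal d * Vᴴ by
    simp [mul_assoc], Matrix.trace_mul_cycle]
  rw [Matrix.trace]
  simp [Matrix.mul_diagonal, Matrix.diag, mul_comm, mul_assoc]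

section Spectral

variable {σ : Matrix n n ℂ} (hσ : σ.IsHermitian)

/-- eigenvector unitary as a plain matrix -/
abbrev eV : Matrix n n ℂ := (hσ.eigenvectorUnitary : Matrix n n ℂ)

theorem eV_conj_mul : (eV hσ)ᴴ * eV hσ = 1 := by
  simpa [Matrix.star_eq_conjTranspose] using
    (Matrix.mem_unitaryGroup_iff').mp hσ.eigenvectorUnitary.2

theorem eV_mul_conj : eV hσ * (eV hσ)ᴴ = 1 := by
  simpa [Matrix.star_eq_conjTranspose] using
    (Matrix.mem_unitaryGroup_iff).mp hσ.eigenvectorUnitary.2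

theorem spectral : σ = eV hσ * Matrix.diagonal (fun j => (hσ.eigenvalues j : ℂ)) * (eV hσ)ᴴ := by
  simpa [Matrix.star_eq_conjTranspose, Function.comp_def] using hσ.spectral_theorem

theorem matLog_spectral :
    matLog σ = eV hσ * Matrix.diagonal (fun j => (Real.log (hσ.eigenvalues j) : ℂ)) * (eV hσ)ᴴ := by
  rw [matLog, dif_pos hσ]

theorem trace_mul_matLog (M : Matrix n n ℂ) :
    (M * matLog σ).trace
      = ∑ j, (Real.log (hσ.eigenvalues j) : ℂ) * (((eV hσ)ᴴ * M * eV hσ) j j) := by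
  rw [matLog_spectral hσ, trace_mul_conj_diag]

theorem conj_eV_self : (eV hσ)ᴴ * σ * eV hσ = Matrix.diagonal (fun j => (hσ.eigenvalues j : ℂ)) := by
  have h : (eV hσ)ᴴ * σ * eV hσ
      = (eV hσ)ᴴ * (eV hσ * Matrix.diagonal (fun j => (hσ.eigenvalues j : ℂ)) * (eV hσ)ᴴ) * eV hσ := by
    rw [← spectral hσ]
  rw [h, show (eV hσ)ᴴ * (eV hσ * Matrix.diagonal (fun j => (hσ.eigenvalues j : ℂ)) * (eV hσ)ᴴ) * eV hσ
      = ((eV hσ)ᴴ * eV hσ) * Matrix.diagonal (fun j => (hσ.eigenvalues j : ℂ)) * ((eV hσ)ᴴ * eV hσ) by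
    simp [mul_assoc], eV_conj_mul hσ]
  simp

theorem trace_eq_sum_eigenvalues : σ.trace = ∑ j, (hσ.eigenvalues j : ℂ) := by
  have h : σ.trace
      = (eV hσ * Matrix.diagonal (fun j => (hσ.eigenvalues j : ℂ)) * (eV hσ)ᴴ).trace := by
    rw [← spectral hσ]
  rw [h, Matrix.trace_mul_cycle, eV_conj_mul hσ, one_mul, Matrix.trace_diagonal]

end Spectral

end Aux

namespace Aux

variable {n : Type*} [Fintype n] [DecidableEq n]

theorem scalar_klein {p q : ℝ} (hp : 0 ≤ p) (hq : 0 ≤ q) (hz : q = 0 → p = 0) :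
    p - q ≤ p * Real.log p - p * Real.log q := by
  rcases eq_or_lt_of_le hp with h | hp0
  · simp [← h]; linarith
  rcases eq_or_lt_of_le hq with h | hq0
  · exact absurd (hz h.symm) (ne_of_gt hp0)
  have h := Real.log_le_sub_one_of_pos (div_pos hq0 hp0)
  rw [Real.log_div (ne_of_gt hq0) (ne_of_gt hp0)] at h
  have h2 := mul_le_mul_of_nonneg_left h hp0.le
  have h3 : p * (q / p) = q := by field_simp
  nlinarith

theorem mulVec_eigen {σ : Matrix n n ℂ} (hσ : σ.IsHermitian) (j : n) :
    σ *ᵥ (fun i => eV hσ i j) = (hσ.eigenvalues j : ℂ) • (fun i => eV hσ i j) := by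
  have h : σ * eV hσ = eV hσ * Matrix.diagonal (fun j => (hσ.eigenvalues j : ℂ)) := by
    have h2 : σ * eV hσ
        = eV hσ * Matrix.diagonal (fun j => (hσ.eigenvalues j : ℂ)) * ((eV hσ)ᴴ * eV hσ) := by
      rw [show eV hσ * Matrix.diagonal (fun j => (hσ.eigenvalues j : ℂ)) * ((eV hσ)ᴴ * eV hσ)
          = (eV hσ * Matrix.diagonal (fun j => (hσ.eigenvalues j : ℂ)) * (eV hσ)ᴴ) * eV hσ by
        simp [mul_assoc], ← spectral hσ]
    rw [h2, eV_conj_mul hσ, mul_one]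
  funext i
  have := congrFun (congrFun h i) j
  simp only [Matrix.mul_apply, Matrix.diagonal_apply, mul_ite, mul_zero,
    Finset.sum_ite_eq', Finset.mem_univ, if_true] at this
  simpa [Matrix.mulVec, dotProduct, Pi.smul_apply, smul_eq_mul, mul_comm] using this

theorem conj_entry_eq (W : Matrix n n ℂ) (d : n → ℝ) (j : n) :
    ((W * Matrix.diagonal (fun i => (d i : ℂ)) * Wᴴ) j j)
      = ((∑ i, d i * Complex.normSq (W j i) : ℝ) : ℂ) := by
  push_cast
  rw [Matrix.mul_apply]
  refine Finset.sum_congr rfl fun k _ => ?_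
  rw [Matrix.mul_diagonal, Matrix.conjTranspose_apply]
  rw [show W j k * (d k : ℂ) * star (W j k) = (d k : ℂ) * (W j k * star (W j k)) by ring]
  rw [Complex.star_def, Complex.mul_conj]

theorem row_sum_one {W : Matrix n n ℂ} (hW : W * Wᴴ = 1) (j : n) :
    ∑ i, Complex.normSq (W j i) = 1 := by
  have := congrFun (congrFun hW j) j
  rw [Matrix.mul_apply] at this
  have h2 : ((∑ i, Complex.normSq (W j i) : ℝ) : ℂ) = 1 := by
    push_cast
    rw [show (1:ℂ) = (1 : Matrix n n ℂ) j j by simp, ← this]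
    refine Finset.sum_congr rfl fun k _ => ?_
    rw [Matrix.conjTranspose_apply, Complex.star_def, Complex.mul_conj]
  exact_mod_cast h2

theorem col_sum_one {W : Matrix n n ℂ} (hW : Wᴴ * W = 1) (i : n) :
    ∑ j, Complex.normSq (W j i) = 1 := by
  have h : (Wᴴ) * (Wᴴ)ᴴ = 1 := by simpa using hW
  simpa [Matrix.conjTranspose_apply, Complex.normSq_conj] using row_sum_one h i

end Aux

namespace Aux

variable {n : Type*} [Fintype n] [DecidableEq n]

theorem conj_rho_eq {ρ σ : Matrix n n ℂ} (hρ : ρ.PosSemidef) (hσ : σ.IsHermitian) :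
    (eV hσ)ᴴ * ρ * eV hσ
      = ((eV hσ)ᴴ * eV hρ.1) * Matrix.diagonal (fun i => (hρ.1.eigenvalues i : ℂ))
        * ((eV hσ)ᴴ * eV hρ.1)ᴴ := by
  have h : (eV hσ)ᴴ * ρ * eV hσ
      = (eV hσ)ᴴ * (eV hρ.1 * Matrix.diagonal (fun i => (hρ.1.eigenvalues i : ℂ)) * (eV hρ.1)ᴴ)
        * eV hσ := by rw [← spectral hρ.1]
  rw [h, Matrix.conjTranspose_mul, Matrix.conjTranspose_conjTranspose]
  simp [mul_assoc]

/-- real form of `Tr[ρ log σ]` with overlap coefficients -/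
theorem trace_mul_matLog_re {ρ σ : Matrix n n ℂ} (hρ : ρ.PosSemidef) (hσ : σ.IsHermitian) :
    (ρ * matLog σ).trace.re
      = ∑ j, Real.log (hσ.eigenvalues j)
          * (∑ i, hρ.1.eigenvalues i * Complex.normSq (((eV hσ)ᴴ * eV hρ.1) j i)) := by
  rw [trace_mul_matLog hσ, Complex.re_sum]
  refine Finset.sum_congr rfl fun j _ => ?_
  rw [conj_rho_eq hρ hσ, conj_entry_eq]
  rw [← Complex.ofReal_mul, Complex.ofReal_re]

/-- `Tr[ρ log ρ]` in eigenvalues -/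
theorem trace_mul_matLog_self_re {ρ : Matrix n n ℂ} (hρ : ρ.IsHermitian) :
    (ρ * matLog ρ).trace.re = ∑ i, hρ.eigenvalues i * Real.log (hρ.eigenvalues i) := by
  rw [trace_mul_matLog hρ, Complex.re_sum]
  refine Finset.sum_congr rfl fun j _ => ?_
  rw [conj_eV_self hρ, Matrix.diagonal_apply_eq, ← Complex.ofReal_mul, Complex.ofReal_re,
    mul_comm]

/-- vanishing overlaps for null eigenvectors -/
theorem overlap_zero {ρ σ : Matrix n n ℂ} (hρ : ρ.PosSemidef) (hσ : σ.IsHermitian)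
    (hker : ∀ v, σ *ᵥ v = 0 → ρ *ᵥ v = 0) (j : n) (hq : hσ.eigenvalues j = 0) (i : n) :
    hρ.1.eigenvalues i * Complex.normSq (((eV hσ)ᴴ * eV hρ.1) j i) = 0 := by
  have hv : σ *ᵥ (fun i => eV hσ i j) = 0 := by
    rw [mulVec_eigen hσ j, hq]; simp
  have hρv := hker _ hv
  have hentry : ((eV hσ)ᴴ * ρ * eV hσ) j j = 0 := by
    rw [show (eV hσ)ᴴ * ρ * eV hσ = (eV hσ)ᴴ * (ρ * eV hσ) by simp [mul_assoc], Matrix.mul_apply]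
    refine Finset.sum_eq_zero fun k _ => ?_
    have : (ρ * eV hσ) k j = 0 := by
      have := congrFun hρv k
      simpa [Matrix.mul_apply, Matrix.mulVec, dotProduct] using this
    rw [this, mul_zero]
  rw [conj_rho_eq hρ hσ, conj_entry_eq] at hentry
  have hsum : ∑ i, hρ.1.eigenvalues i * Complex.normSq (((eV hσ)ᴴ * eV hρ.1) j i) = 0 := by
    exact_mod_cast hentry
  have hnn : ∀ i ∈ Finset.univ,
      0 ≤ hρ.1.eigenvalues i * Complex.normSq (((eV hσ)ᴴ * eV hρ.1) j i) :=
    fun i _ => mul_nonneg (hρ.eigenvalues_nonneg i) (Complex.normSq_nonneg _)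
  exact (Finset.sum_eq_zero_iff_of_nonneg hnn).mp hsum i (Finset.mem_univ i)

/-- **Klein's inequality** -/
theorem klein {ρ σ : Matrix n n ℂ} (hρ : ρ.PosSemidef) (hσ : σ.PosSemidef)
    (hker : ∀ v, σ *ᵥ v = 0 → ρ *ᵥ v = 0) :
    ρ.trace.re - σ.trace.re ≤ (ρ * (matLog ρ - matLog σ)).trace.re := by
  set W := (eV hσ.1)ᴴ * eV hρ.1 with hW
  set p := hρ.1.eigenvalues with hp
  set q := hσ.1.eigenvalues with hq
  set c : n → n → ℝ := fun j i => Complex.normSq (W j i) with hc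
  have hWu : W * Wᴴ = 1 := by
    rw [hW, Matrix.conjTranspose_mul, Matrix.conjTranspose_conjTranspose,
      show (eV hσ.1)ᴴ * eV hρ.1 * ((eV hρ.1)ᴴ * eV hσ.1)
        = (eV hσ.1)ᴴ * (eV hρ.1 * (eV hρ.1)ᴴ) * eV hσ.1 by simp [mul_assoc],
      eV_mul_conj hρ.1, mul_one, eV_conj_mul hσ.1]
  have hWu' : Wᴴ * W = 1 := by
    rw [hW, Matrix.conjTranspose_mul, Matrix.conjTranspose_conjTranspose,
      show (eV hρ.1)ᴴ * eV hσ.1 * ((eV hσ.1)ᴴ * eV hρ.1)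
        = (eV hρ.1)ᴴ * (eV hσ.1 * (eV hσ.1)ᴴ) * eV hρ.1 by simp [mul_assoc],
      eV_mul_conj hσ.1, mul_one, eV_conj_mul hρ.1]
  have hrow : ∀ j, ∑ i, c j i = 1 := row_sum_one hWu
  have hcol : ∀ i, ∑ j, c j i = 1 := col_sum_one hWu'
  have hpn : ∀ i, 0 ≤ p i := hρ.eigenvalues_nonneg
  have hqn : ∀ j, 0 ≤ q j := hσ.eigenvalues_nonneg
  have hcn : ∀ j i, 0 ≤ c j i := fun j i => Complex.normSq_nonneg _
  have hzero : ∀ j, q j = 0 → ∀ i, p i * c j i = 0 := fun j hj i =>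
    overlap_zero hρ hσ.1 hker j hj i
  -- expand the trace
  rw [mul_sub, Matrix.trace_sub, Complex.sub_re, trace_mul_matLog_self_re hρ.1,
    trace_mul_matLog_re hρ hσ.1]
  have htrρ : ρ.trace.re = ∑ i, p i := by
    rw [trace_eq_sum_eigenvalues hρ.1, Complex.re_sum]
    simp
    rfl
  have htrσ : σ.trace.re = ∑ j, q j := by
    rw [trace_eq_sum_eigenvalues hσ.1, Complex.re_sum]
    simp
    rfl
  rw [htrρ, htrσ]
  -- rewrite all four sums as double sums over (j, i)
  have e1 : ∑ i, p i = ∑ j, ∑ i, c j i * p i := by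
    rw [Finset.sum_comm]
    refine Finset.sum_congr rfl fun i _ => ?_
    rw [← Finset.sum_mul, hcol i, one_mul]
  have e2 : ∑ j, q j = ∑ j, ∑ i, c j i * q j := by
    refine Finset.sum_congr rfl fun j _ => ?_
    rw [← Finset.sum_mul, hrow j, one_mul]
  have e3 : ∑ i, p i * Real.log (p i) = ∑ j, ∑ i, c j i * (p i * Real.log (p i)) := by
    rw [Finset.sum_comm]
    refine Finset.sum_congr rfl fun i _ => ?_
    rw [← Finset.sum_mul, hcol i, one_mul]
  have e4 : ∑ j, Real.log (q j) * (∑ i, p i * c j i)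
      = ∑ j, ∑ i, c j i * (p i * Real.log (q j)) := by
    refine Finset.sum_congr rfl fun j _ => ?_
    rw [Finset.mul_sum]
    refine Finset.sum_congr rfl fun i _ => ?_
    ring
  rw [e1, e2, e3, e4, ← Finset.sum_sub_distrib, ← Finset.sum_sub_distrib]
  refine Finset.sum_le_sum fun j _ => ?_
  rw [← Finset.sum_sub_distrib, ← Finset.sum_sub_distrib]
  refine Finset.sum_le_sum fun i _ => ?_
  rw [← mul_sub, ← mul_sub]
  rcases eq_or_lt_of_le (hcn j i) with h | h
  · rw [← h]; simp
  · refine mul_le_mul_of_nonneg_left ?_ (le_of_lt h)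
    refine scalar_klein (hpn i) (hqn j) fun hqj => ?_
    have := hzero j hqj i
    rcases mul_eq_zero.mp this with h' | h'
    · exact h'
    · exact absurd h' (ne_of_gt h)

end Aux

namespace Aux

variable {n : Type*} [Fintype n] [DecidableEq n]

/-- convex combination of two matrices along the segment -/
def seg (β β' : Matrix n n ℂ) (lam : ℝ) : Matrix n n ℂ :=
  (lam : ℂ) • β + (1 - (lam : ℂ)) • β'

theorem seg_smul_eq (β β' : Matrix n n ℂ) (lam : ℝ) :
    seg β β' lam = ((lam : ℝ) : ℂ) • β + (((1 - lam : ℝ)) : ℂ) • β' := by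
  rw [seg]; push_cast; ring_nf

theorem seg_zero (β β' : Matrix n n ℂ) : seg β β' 0 = β' := by
  simp [seg]

theorem seg_posSemidef {β β' : Matrix n n ℂ} (hβ : β.PosSemidef) (hβ' : β'.PosSemidef)
    {lam : ℝ} (h0 : 0 ≤ lam) (h1 : lam ≤ 1) : (seg β β' lam).PosSemidef := by
  rw [seg_smul_eq]
  refine Matrix.PosSemidef.of_dotProduct_mulVec_nonneg ?_ ?_
  · rw [Matrix.IsHermitian, Matrix.conjTranspose_add, Matrix.conjTranspose_smul,
      Matrix.conjTranspose_smul, hβ.1, hβ'.1]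
    simp [Complex.star_def, Complex.conj_ofReal]
  · intro x
    rw [Matrix.add_mulVec, dotProduct_add, Matrix.smul_mulVec,
      Matrix.smul_mulVec, dotProduct_smul, dotProduct_smul]
    have ha := hβ.dotProduct_mulVec_nonneg x
    have hb := hβ'.dotProduct_mulVec_nonneg x
    have h2 : (0:ℝ) ≤ 1 - lam := by linarith
    exact add_nonneg (smul_nonneg (Complex.zero_le_real.mpr h0) ha)
      (smul_nonneg (Complex.zero_le_real.mpr h2) hb)

theorem seg_trace {β β' : Matrix n n ℂ} (hβ : β.trace = 1) (hβ' : β'.trace = 1) (lam : ℝ) :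
    (seg β β' lam).trace = 1 := by
  rw [seg, Matrix.trace_add, Matrix.trace_smul, Matrix.trace_smul, hβ, hβ']
  simp

/-- support inclusion gives kernel inclusion (for Hermitian matrices) -/
theorem ker_incl_of_suppLE {β β' : Matrix n n ℂ} (hβ : β.IsHermitian) (hβ' : β'.IsHermitian)
    (hs : suppLE β β') : ∀ v, β' *ᵥ v = 0 → β *ᵥ v = 0 := by
  intro v hv
  have key : ∀ x, star v ⬝ᵥ (β *ᵥ x) = 0 := by
    intro x
    obtain ⟨y, hy⟩ := hs ⟨x, rfl⟩
    simp only [Matrix.toLin'_apply] at hy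
    have hsv : star v ᵥ* β' = star (β' *ᵥ v) := by
      rw [Matrix.star_mulVec, show β'ᴴ = β' from hβ']
    rw [← hy, Matrix.dotProduct_mulVec, hsv, hv]
    simp
  have h2 : ∀ x, star (β *ᵥ v) ⬝ᵥ x = 0 := by
    intro x
    have hkx := key x
    have hsv : star v ᵥ* β = star (β *ᵥ v) := by
      rw [Matrix.star_mulVec, show βᴴ = β from hβ]
    rwa [Matrix.dotProduct_mulVec, hsv] at hkx
  have := h2 (β *ᵥ v)
  exact dotProduct_star_self_eq_zero.mp this

/-- kernel of the segment is contained in kernels of the endpoints, for `lam < 1` -/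
theorem seg_ker {β β' : Matrix n n ℂ} (hβ : β.PosSemidef) (hβ' : β'.PosSemidef)
    {lam : ℝ} (h0 : 0 ≤ lam) (h1 : lam < 1) :
    ∀ v, seg β β' lam *ᵥ v = 0 → β' *ᵥ v = 0 := by
  intro v hv
  have hdot : star v ⬝ᵥ (seg β β' lam *ᵥ v) = 0 := by rw [hv, dotProduct_zero]
  rw [seg_smul_eq, Matrix.add_mulVec, dotProduct_add, Matrix.smul_mulVec,
    Matrix.smul_mulVec, dotProduct_smul, dotProduct_smul] at hdot
  have ha : (0:ℂ) ≤ (lam:ℂ) • (star v ⬝ᵥ β *ᵥ v) :=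
    smul_nonneg (Complex.zero_le_real.mpr h0) (hβ.dotProduct_mulVec_nonneg v)
  have hb : (0:ℂ) ≤ ((1 - lam : ℝ):ℂ) • (star v ⬝ᵥ β' *ᵥ v) :=
    smul_nonneg (Complex.zero_le_real.mpr (by linarith)) (hβ'.dotProduct_mulVec_nonneg v)
  have hz := (add_eq_zero_iff_of_nonneg ha hb).mp hdot
  have h3 : ((1 - lam : ℝ):ℂ) • (star v ⬝ᵥ β' *ᵥ v) = 0 := hz.2
  have h4 : star v ⬝ᵥ β' *ᵥ v = 0 := by
    have : ((1 - lam : ℝ):ℂ) ≠ 0 := by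
      simp only [ne_eq, Complex.ofReal_eq_zero]
      intro h; rw [sub_eq_zero] at h; exact absurd h.symm (ne_of_lt h1)
    exact (smul_eq_zero.mp h3).resolve_left this
  exact (hβ'.dotProduct_mulVec_zero_iff v).mp h4

/-- range of the segment lands in range of `β'` -/
theorem seg_range {β β' : Matrix n n ℂ} (hs : suppLE β β') (lam : ℝ) (x : n → ℂ) :
    ∃ y, seg β β' lam *ᵥ x = β' *ᵥ y := by
  obtain ⟨z, hz⟩ := hs ⟨x, rfl⟩
  simp only [Matrix.toLin'_apply] at hz
  refine ⟨(lam:ℂ) • z + ((1 - lam : ℝ):ℂ) • x, ?_⟩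
  rw [seg_smul_eq, Matrix.add_mulVec, Matrix.smul_mulVec, Matrix.smul_mulVec,
    Matrix.mulVec_add, Matrix.mulVec_smul, Matrix.mulVec_smul, ← hz]

end Aux

namespace Aux

set_option linter.unusedSectionVars false

variable {n : Type*} [Fintype n] [DecidableEq n]

theorem entry_eq_dot (M V : Matrix n n ℂ) (j : n) :
    (Vᴴ * M * V) j j = star (fun i => V i j) ⬝ᵥ (M *ᵥ (fun i => V i j)) := by
  simp [Matrix.mul_apply, dotProduct, Matrix.mulVec, Matrix.conjTranspose_apply,
    Finset.mul_sum, Finset.sum_mul, mul_assoc]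
  rw [Finset.sum_comm]

theorem eigcol_norm {σ : Matrix n n ℂ} (hσ : σ.IsHermitian) (j : n) :
    star (fun i => eV hσ i j) ⬝ᵥ (fun i => eV hσ i j) = 1 := by
  have h := congrFun (congrFun (eV_conj_mul hσ) j) j
  rw [Matrix.mul_apply] at h
  simp only [Matrix.one_apply_eq] at h
  rw [← h]
  simp [dotProduct, Matrix.conjTranspose_apply]

/-- quadratic lower bound on the range of a PSD matrix with unit trace -/
theorem exists_min_pos_eigenvalue {β' : Matrix n n ℂ} (hβ' : β'.PosSemidef)
    (htr : β'.trace = 1) :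
    ∃ a : ℝ, 0 < a ∧ a ≤ 1 ∧
      ∀ y : n → ℂ, a * (star (β' *ᵥ y) ⬝ᵥ (β' *ᵥ y)).re
          ≤ (star (β' *ᵥ y) ⬝ᵥ (β' *ᵥ (β' *ᵥ y))).re := by
  classical
  set q := hβ'.1.eigenvalues with hq
  have hqn : ∀ i, 0 ≤ q i := hβ'.eigenvalues_nonneg
  have hsum : ∑ i, q i = 1 := by
    have h := trace_eq_sum_eigenvalues hβ'.1
    rw [htr] at h
    exact_mod_cast h.symm
  set s := Finset.univ.filter (fun i => 0 < q i) with hs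
  have hne : s.Nonempty := by
    rcases Finset.eq_empty_or_nonempty s with h | h
    · exfalso
      have hz : ∑ i, q i = 0 := Finset.sum_eq_zero fun i _ => by
        by_contra hqi
        have h1 : 0 < q i := lt_of_le_of_ne (hqn i) (Ne.symm hqi)
        have h2 : i ∈ s := Finset.mem_filter.mpr ⟨Finset.mem_univ i, h1⟩
        rw [h] at h2
        exact absurd h2 (Finset.notMem_empty i)
      rw [hsum] at hz; norm_num at hz
    · exact h
  set a := s.inf' hne q with ha
  obtain ⟨i₀, hi₀, hai₀⟩ := Finset.exists_mem_eq_inf' hne q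
  have hapos : 0 < a := by rw [ha, hai₀]; exact (Finset.mem_filter.mp hi₀).2
  have hamin : ∀ i, 0 < q i → a ≤ q i := fun i hi =>
    Finset.inf'_le q (Finset.mem_filter.mpr ⟨Finset.mem_univ i, hi⟩)
  have hale : a ≤ 1 := by
    rw [ha, hai₀, ← hsum]
    exact Finset.single_le_sum (fun i _ => hqn i) (Finset.mem_univ _)
  refine ⟨a, hapos, hale, fun y => ?_⟩
  set V := eV hβ'.1 with hV
  set v := β' *ᵥ y with hv
  set c := Vᴴ *ᵥ v with hc
  have hvc : v = V *ᵥ c := by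
    rw [hc, Matrix.mulVec_mulVec, eV_mul_conj hβ'.1, Matrix.one_mulVec]
  have hcj : ∀ j, q j = 0 → c j = 0 := by
    intro j hj
    have h2 : Vᴴ * β' = Matrix.diagonal (fun j => (q j : ℂ)) * Vᴴ := by
      have h3 : Vᴴ * β' * V = Matrix.diagonal (fun j => (q j : ℂ)) := conj_eV_self hβ'.1
      calc Vᴴ * β' = Vᴴ * β' * (V * Vᴴ) := by rw [eV_mul_conj hβ'.1, mul_one]
        _ = (Vᴴ * β' * V) * Vᴴ := by simp [mul_assoc]
        _ = Matrix.diagonal (fun j => (q j : ℂ)) * Vᴴ := by rw [h3]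
    have : c = Matrix.diagonal (fun j => (q j : ℂ)) *ᵥ (Vᴴ *ᵥ y) := by
      rw [hc, hv, Matrix.mulVec_mulVec, h2, ← Matrix.mulVec_mulVec]
    rw [this]
    simp [Matrix.mulVec_diagonal, hj]
  have hnorm : star v ⬝ᵥ v = star c ⬝ᵥ c := by
    rw [hvc, Matrix.star_mulVec, ← Matrix.dotProduct_mulVec, Matrix.mulVec_mulVec,
      eV_conj_mul hβ'.1, Matrix.one_mulVec]
  have hquad : star v ⬝ᵥ (β' *ᵥ v) = star c ⬝ᵥ (Matrix.diagonal (fun j => (q j : ℂ)) *ᵥ c) := by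
    rw [hvc, Matrix.star_mulVec, Matrix.mulVec_mulVec, ← Matrix.dotProduct_mulVec,
      Matrix.mulVec_mulVec, show Vᴴ * (β' * V) = Vᴴ * β' * V by simp [mul_assoc],
      conj_eV_self hβ'.1]
  rw [hnorm, hquad]
  have h1 : (star c ⬝ᵥ c).re = ∑ j, Complex.normSq (c j) := by
    rw [dotProduct, Complex.re_sum]
    refine Finset.sum_congr rfl fun j _ => ?_
    simp [Complex.normSq_apply, Complex.mul_re]
  have h2 : (star c ⬝ᵥ (Matrix.diagonal (fun j => (q j : ℂ)) *ᵥ c)).re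
      = ∑ j, q j * Complex.normSq (c j) := by
    rw [dotProduct, Complex.re_sum]
    refine Finset.sum_congr rfl fun j _ => ?_
    rw [Matrix.mulVec_diagonal]
    simp only [Pi.star_apply]
    have : star (c j) * ((q j : ℂ) * c j) = (q j : ℂ) * (star (c j) * c j) := by ring
    rw [this, Complex.star_def, ← Complex.normSq_eq_conj_mul_self, ← Complex.ofReal_mul,
      Complex.ofReal_re]
  rw [h1, h2, Finset.mul_sum]
  refine Finset.sum_le_sum fun j _ => ?_
  rcases eq_or_lt_of_le (hqn j) with h' | h'
  · rw [hcj j h'.symm]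
    simp
  · exact mul_le_mul_of_nonneg_right (hamin j h') (Complex.normSq_nonneg _)

end Aux

namespace Aux

set_option linter.unusedSectionVars false

variable {n : Type*} [Fintype n] [DecidableEq n]

theorem re_smul_dot (lam : ℝ) (z : ℂ) : ((lam:ℂ) • z).re = lam * z.re := by
  rw [smul_eq_mul, Complex.re_ofReal_mul]

theorem dot_re_nonneg {β : Matrix n n ℂ} (hβ : β.PosSemidef) (v : n → ℂ) :
    0 ≤ (star v ⬝ᵥ β *ᵥ v).re := by
  have := hβ.dotProduct_mulVec_nonneg v
  rw [Complex.le_def] at this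
  exact this.1

/-- eigenvalues of the segment lie in `{0} ∪ [a/2, 1]` for `lam ∈ [0, 1/2]` -/
theorem seg_eigenvalue_bound {β β' : Matrix n n ℂ} (hβ : β.PosSemidef) (hβ' : β'.PosSemidef)
    (tβ : β.trace = 1) (tβ' : β'.trace = 1) (hs : suppLE β β')
    {a : ℝ} (hbd : ∀ y : n → ℂ, a * (star (β' *ᵥ y) ⬝ᵥ (β' *ᵥ y)).re
          ≤ (star (β' *ᵥ y) ⬝ᵥ (β' *ᵥ (β' *ᵥ y))).re)
    {lam : ℝ} (h0 : 0 ≤ lam) (h1 : lam ≤ 1/2)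
    (hσ : (seg β β' lam).PosSemidef) (j : n) :
    hσ.1.eigenvalues j = 0 ∨ (a/2 ≤ hσ.1.eigenvalues j ∧ hσ.1.eigenvalues j ≤ 1) := by
  set μ := hσ.1.eigenvalues j with hμ
  have hqn : ∀ i, 0 ≤ hσ.1.eigenvalues i := hσ.eigenvalues_nonneg
  have htr : ∑ i, hσ.1.eigenvalues i = 1 := by
    have h := trace_eq_sum_eigenvalues hσ.1
    rw [seg_trace tβ tβ' lam] at h
    exact_mod_cast h.symm
  have hle1 : μ ≤ 1 := by
    rw [← htr]
    exact Finset.single_le_sum (fun i _ => hqn i) (Finset.mem_univ j)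
  rcases eq_or_lt_of_le (hqn j) with h | hpos
  · exact Or.inl h.symm
  right
  refine ⟨?_, hle1⟩
  set v : n → ℂ := fun i => eV hσ.1 i j with hv
  have hnorm : star v ⬝ᵥ v = 1 := eigcol_norm hσ.1 j
  have heig : seg β β' lam *ᵥ v = (μ:ℂ) • v := mulVec_eigen hσ.1 j
  -- v lies in the range of β'
  have hrange : ∃ y, v = β' *ᵥ y := by
    have h2 : seg β β' lam *ᵥ (((μ:ℂ))⁻¹ • v) = v := by
      rw [Matrix.mulVec_smul, heig, smul_smul, inv_mul_cancel₀ (by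
        simp only [ne_eq, Complex.ofReal_eq_zero]; exact ne_of_gt hpos), one_smul]
    obtain ⟨y, hy⟩ := seg_range hs lam (((μ:ℂ))⁻¹ • v)
    exact ⟨y, by rw [← h2, hy]⟩
  obtain ⟨y, hy⟩ := hrange
  -- quadratic forms
  have hμeq : μ = lam * (star v ⬝ᵥ β *ᵥ v).re + (1 - lam) * (star v ⬝ᵥ β' *ᵥ v).re := by
    have h3 : star v ⬝ᵥ (seg β β' lam *ᵥ v) = (μ:ℂ) := by
      rw [heig, dotProduct_smul, hnorm, smul_eq_mul, mul_one]
    rw [seg_smul_eq] at h3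
    rw [Matrix.add_mulVec, dotProduct_add, Matrix.smul_mulVec,
      Matrix.smul_mulVec, dotProduct_smul, dotProduct_smul] at h3
    have h4 := congrArg Complex.re h3
    rw [Complex.add_re, re_smul_dot, re_smul_dot] at h4
    rw [Complex.ofReal_re] at h4
    exact h4.symm
  have hB : a ≤ (star v ⬝ᵥ β' *ᵥ v).re := by
    have := hbd y
    rw [← hy] at this
    have hn1 : (star v ⬝ᵥ v).re = 1 := by rw [hnorm]; simp
    rw [hn1, mul_one] at this
    exact this
  have hA : 0 ≤ (star v ⬝ᵥ β *ᵥ v).re := dot_re_nonneg hβ v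
  have hB0 : 0 ≤ (star v ⬝ᵥ β' *ᵥ v).re := dot_re_nonneg hβ' v
  rw [hμeq]
  nlinarith

/-- polynomial functional calculus: conjugation -/
theorem aeval_conj (V A : Matrix n n ℂ) (hVl : Vᴴ * V = 1) (hVr : V * Vᴴ = 1) (p : Polynomial ℝ) :
    Polynomial.aeval (V * A * Vᴴ) p = V * Polynomial.aeval A p * Vᴴ := by
  have hpow : ∀ k : ℕ, (V * A * Vᴴ) ^ k = V * A ^ k * Vᴴ := by
    intro k
    induction k with
    | zero => simp [hVr]
    | succ m ih =>
        rw [pow_succ, ih, pow_succ]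
        rw [show V * A ^ m * Vᴴ * (V * A * Vᴴ) = V * A ^ m * (Vᴴ * V) * A * Vᴴ by simp [mul_assoc],
          hVl, mul_one]
        simp [mul_assoc]
  induction p using Polynomial.induction_on' with
  | add f g hf hg => rw [map_add, map_add, hf, hg, mul_add, add_mul]
  | monomial k r =>
      rw [Polynomial.aeval_monomial, Polynomial.aeval_monomial, hpow,
        Algebra.algebraMap_eq_smul_one, smul_one_mul, smul_one_mul, Matrix.mul_smul,
        Matrix.smul_mul]

/-- polynomial functional calculus: diagonal matrices -/
theorem aeval_diagonal (d : n → ℂ) (p : Polynomial ℝ) :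
    Polynomial.aeval (Matrix.diagonal d) p
      = Matrix.diagonal (fun i => Polynomial.aeval (d i) p) := by
  induction p using Polynomial.induction_on' with
  | add f g hf hg =>
      rw [map_add, hf, hg, Matrix.diagonal_add]
      exact congrArg Matrix.diagonal (funext fun i => (map_add _ f g).symm)
  | monomial k r =>
      simp only [Polynomial.aeval_monomial]
      rw [Matrix.diagonal_pow, Matrix.algebraMap_eq_diagonal, ← Matrix.diagonal_mul_diagonal]
      congr 1

theorem aeval_ofReal (x : ℝ) (p : Polynomial ℝ) :
    Polynomial.aeval ((x : ℂ)) p = ((p.eval x : ℝ) : ℂ) := by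
  rw [show ((x:ℂ)) = algebraMap ℝ ℂ x from rfl,
    Polynomial.aeval_algebraMap_apply_eq_algebraMap_eval]
  rfl

theorem aeval_spectral {σ : Matrix n n ℂ} (hσ : σ.IsHermitian) (p : Polynomial ℝ) :
    Polynomial.aeval σ p
      = eV hσ * Matrix.diagonal (fun j => ((p.eval (hσ.eigenvalues j) : ℝ) : ℂ)) * (eV hσ)ᴴ := by
  have h : Polynomial.aeval σ p
      = Polynomial.aeval (eV hσ * Matrix.diagonal (fun j => (hσ.eigenvalues j : ℂ)) * (eV hσ)ᴴ) p := by
    rw [← spectral hσ]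
  rw [h, aeval_conj _ _ (eV_conj_mul hσ) (eV_mul_conj hσ), aeval_diagonal]
  congr 1
  ext i
  simp [aeval_ofReal]

theorem trace_mul_aeval_re (M : Matrix n n ℂ) {σ : Matrix n n ℂ} (hσ : σ.IsHermitian)
    (p : Polynomial ℝ) :
    (M * Polynomial.aeval σ p).trace.re
      = ∑ j, p.eval (hσ.eigenvalues j) * (((eV hσ)ᴴ * M * eV hσ) j j).re := by
  rw [aeval_spectral hσ, trace_mul_conj_diag, Complex.re_sum]
  refine Finset.sum_congr rfl fun j _ => ?_
  exact Complex.re_ofReal_mul _ _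

theorem trace_mul_matLog_re' (M : Matrix n n ℂ) {σ : Matrix n n ℂ} (hσ : σ.IsHermitian) :
    (M * matLog σ).trace.re
      = ∑ j, Real.log (hσ.eigenvalues j) * (((eV hσ)ᴴ * M * eV hσ) j j).re := by
  rw [trace_mul_matLog hσ, Complex.re_sum]
  refine Finset.sum_congr rfl fun j _ => ?_
  exact Complex.re_ofReal_mul _ _

end Aux

namespace Aux

set_option linter.unusedSectionVars false

variable {n : Type*} [Fintype n] [DecidableEq n]

theorem approx_bound {Δ σ : Matrix n n ℂ} (hσ : σ.IsHermitian) (p : Polynomial ℝ) {ε B : ℝ}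
    (hε : 0 ≤ ε)
    (hspec : ∀ j, |Real.log (hσ.eigenvalues j) - p.eval (hσ.eigenvalues j)| ≤ ε)
    (hB : ∑ j, |(((eV hσ)ᴴ * Δ * eV hσ) j j).re| ≤ B) :
    |(Δ * matLog σ).trace.re - (Δ * Polynomial.aeval σ p).trace.re| ≤ ε * B := by
  rw [trace_mul_matLog_re' Δ hσ, trace_mul_aeval_re Δ hσ, ← Finset.sum_sub_distrib]
  have h1 : ∀ j, Real.log (hσ.eigenvalues j) * (((eV hσ)ᴴ * Δ * eV hσ) j j).re
      - p.eval (hσ.eigenvalues j) * (((eV hσ)ᴴ * Δ * eV hσ) j j).re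
      = (Real.log (hσ.eigenvalues j) - p.eval (hσ.eigenvalues j))
        * (((eV hσ)ᴴ * Δ * eV hσ) j j).re := fun j => by ring
  calc |∑ j, (Real.log (hσ.eigenvalues j) * (((eV hσ)ᴴ * Δ * eV hσ) j j).re
      - p.eval (hσ.eigenvalues j) * (((eV hσ)ᴴ * Δ * eV hσ) j j).re)|
      ≤ ∑ j, |Real.log (hσ.eigenvalues j) * (((eV hσ)ᴴ * Δ * eV hσ) j j).re
          - p.eval (hσ.eigenvalues j) * (((eV hσ)ᴴ * Δ * eV hσ) j j).re| :=
        Finset.abs_sum_le_sum_abs _ _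
    _ ≤ ∑ j, ε * |(((eV hσ)ᴴ * Δ * eV hσ) j j).re| := by
        refine Finset.sum_le_sum fun j _ => ?_
        rw [h1 j, abs_mul]
        exact mul_le_mul_of_nonneg_right (hspec j) (abs_nonneg _)
    _ = ε * ∑ j, |(((eV hσ)ᴴ * Δ * eV hσ) j j).re| := by rw [Finset.mul_sum]
    _ ≤ ε * B := mul_le_mul_of_nonneg_left hB hε

theorem diag_abs_sum_le {β β' : Matrix n n ℂ} (hβ : β.PosSemidef) (hβ' : β'.PosSemidef)
    (tβ : β.trace = 1) (tβ' : β'.trace = 1) {V : Matrix n n ℂ} (hV : V * Vᴴ = 1) :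
    ∑ j, |((Vᴴ * (β - β') * V) j j).re| ≤ 2 := by
  have hsplit : ∀ j, (Vᴴ * (β - β') * V) j j = (Vᴴ * β * V) j j - (Vᴴ * β' * V) j j := by
    intro j
    rw [show Vᴴ * (β - β') * V = Vᴴ * β * V - Vᴴ * β' * V by
      rw [Matrix.mul_sub, Matrix.sub_mul]]
    rfl
  have hsum : ∀ (M : Matrix n n ℂ), M.trace = 1 → ∑ j, ((Vᴴ * M * V) j j).re = 1 := by
    intro M hM
    have h : (Vᴴ * M * V).trace = M.trace := by
      rw [Matrix.trace_mul_cycle, show V * Vᴴ * M = M by rw [hV, one_mul]]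
    have h2 : ∑ j, ((Vᴴ * M * V) j j).re = (Vᴴ * M * V).trace.re := by
      rw [Matrix.trace, Complex.re_sum]; rfl
    rw [h2, h, hM]; rfl
  calc ∑ j, |((Vᴴ * (β - β') * V) j j).re|
      ≤ ∑ j, (((Vᴴ * β * V) j j).re + ((Vᴴ * β' * V) j j).re) := by
        refine Finset.sum_le_sum fun j _ => ?_
        rw [hsplit j, Complex.sub_re]
        have h1 : 0 ≤ ((Vᴴ * β * V) j j).re := by
          rw [entry_eq_dot]; exact dot_re_nonneg hβ _
        have h2 : 0 ≤ ((Vᴴ * β' * V) j j).re := by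
          rw [entry_eq_dot]; exact dot_re_nonneg hβ' _
        rw [abs_sub_comm]
        calc |((Vᴴ * β' * V) j j).re - ((Vᴴ * β * V) j j).re|
            ≤ |((Vᴴ * β' * V) j j).re| + |((Vᴴ * β * V) j j).re| := abs_sub _ _
          _ = ((Vᴴ * β * V) j j).re + ((Vᴴ * β' * V) j j).re := by
              rw [abs_of_nonneg h1, abs_of_nonneg h2]; ring
    _ = 2 := by
        rw [Finset.sum_add_distrib, hsum β tβ, hsum β' tβ']; norm_num

theorem cont_P (Δ β β' : Matrix n n ℂ) (p : Polynomial ℝ) :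
    Continuous fun lam : ℝ => ((Δ * Polynomial.aeval (seg β β' lam) p).trace.re) := by
  have h1 : Continuous fun lam : ℝ => seg β β' lam := by
    unfold seg
    exact ((Complex.continuous_ofReal).smul continuous_const).add
      (((continuous_const.sub Complex.continuous_ofReal)).smul continuous_const)
  exact Complex.continuous_re.comp
    ((continuous_const.matrix_mul (p.continuous_aeval.comp h1)).matrix_trace)

/-- linearity of `λ ↦ Tr[seg λ * X].re` -/
theorem seg_mul_trace_re (β β' X : Matrix n n ℂ) (lam : ℝ) :
    ((seg β β' lam) * X).trace.re = lam * (β * X).trace.re + (1 - lam) * (β' * X).trace.re := by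
  rw [seg_smul_eq, Matrix.add_mul, Matrix.smul_mul, Matrix.smul_mul, Matrix.trace_add,
    Matrix.trace_smul, Matrix.trace_smul, Complex.add_re, smul_eq_mul, smul_eq_mul,
    Complex.re_ofReal_mul, Complex.re_ofReal_mul]

theorem sub_mul_trace_re (β β' X : Matrix n n ℂ) :
    ((β - β') * X).trace.re = (β * X).trace.re - (β' * X).trace.re := by
  rw [Matrix.sub_mul, Matrix.trace_sub, Complex.sub_re]

end Aux

namespace Aux

set_option linter.unusedSectionVars false

variable {n : Type*} [Fintype n] [DecidableEq n]

theorem exists_good_poly {a : ℝ} (ha : 0 < a) (ha1 : a ≤ 1) {ε : ℝ} (hε : 0 < ε) :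
    ∃ p : Polynomial ℝ, |p.eval 0| < ε ∧
      ∀ x, a/2 ≤ x → x ≤ 1 → |Real.log x - p.eval x| < ε := by
  set F : ℝ → ℝ := fun x => (min (x / (a/2)) 1) * Real.log (max x (a/2)) with hF
  have ha2 : 0 < a/2 := by linarith
  have hcont : Continuous F := by
    refine Continuous.mul ((continuous_id.div_const _).min continuous_const) ?_
    rw [continuous_iff_continuousAt]
    intro x
    have h1 : ContinuousAt (fun y : ℝ => max y (a/2)) x :=
      (continuous_id.max continuous_const).continuousAt
    have h2 : ContinuousAt Real.log (max x (a/2)) :=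
      Real.continuousAt_log (ne_of_gt (lt_of_lt_of_le ha2 (le_max_right _ _)))
    have heq : (fun y : ℝ => Real.log (max y (a/2)))
        = Real.log ∘ (fun y : ℝ => max y (a/2)) := rfl
    rw [heq]
    exact ContinuousAt.comp (f := fun y : ℝ => max y (a/2)) h2 h1
  obtain ⟨p, hp⟩ := exists_polynomial_near_of_continuousOn 0 1 F hcont.continuousOn ε hε
  refine ⟨p, ?_, ?_⟩
  · have h0 := hp 0 (by constructor <;> norm_num)
    have hF0 : F 0 = 0 := by
      rw [hF]
      simp [zero_div, min_eq_left (zero_le_one)]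
    rw [hF0, sub_zero] at h0
    exact h0
  · intro x hx1 hx2
    have hx0 : 0 ≤ x := le_trans (le_of_lt ha2) hx1
    have hFx : F x = Real.log x := by
      rw [hF]
      have h1 : min (x / (a/2)) 1 = 1 := min_eq_right ((one_le_div ha2).mpr hx1)
      have h2 : max x (a/2) = x := max_eq_left hx1
      simp only [h1, h2, one_mul]
    have := hp x ⟨hx0, hx2⟩
    rw [hFx, abs_sub_comm] at this
    exact this

/-- **Core limit**: the right slope of `λ ↦ Tr[σ_λ log σ_λ]` at `0` tends to `Tr[(β-β') log β']`. -/
theorem core_tendsto {β β' : Matrix n n ℂ} (hβ : β.PosSemidef) (hβ' : β'.PosSemidef)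
    (tβ : β.trace = 1) (tβ' : β'.trace = 1) (hs : suppLE β β') :
    Filter.Tendsto (fun lam : ℝ =>
        (((seg β β' lam) * matLog (seg β β' lam)).trace.re - (β' * matLog β').trace.re) / lam)
      (nhdsWithin 0 (Set.Icc (0:ℝ) 1 \ {0}))
      (nhds (((β - β') * matLog β').trace.re)) := by
  classical
  set g : ℝ → ℝ := fun lam => ((β - β') * matLog (seg β β' lam)).trace.re with hg
  set h : ℝ → ℝ := fun lam => ((seg β β' lam) * matLog (seg β β' lam)).trace.re with hh
  set c : ℝ := (β' * matLog β').trace.re with hc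
  have hg0 : g 0 = ((β - β') * matLog β').trace.re := by rw [hg]; simp only [seg_zero]
  have hker1 : ∀ v, β' *ᵥ v = 0 → β *ᵥ v = 0 := ker_incl_of_suppLE hβ.1 hβ'.1 hs
  have hkerseg : ∀ (lam : ℝ) (v), β' *ᵥ v = 0 → seg β β' lam *ᵥ v = 0 := by
    intro lam v hv
    rw [seg_smul_eq, Matrix.add_mulVec, Matrix.smul_mulVec, Matrix.smul_mulVec,
      hv, hker1 v hv]
    simp
  -- the sandwich
  have sandwich : ∀ lam : ℝ, 0 < lam → lam ≤ 1/2 →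
      lam * g 0 ≤ h lam - c ∧ h lam - c ≤ lam * g lam := by
    intro lam hpos hhalf
    have hPSD : (seg β β' lam).PosSemidef := seg_posSemidef hβ hβ' hpos.le (by linarith)
    have tseg : (seg β β' lam).trace = 1 := seg_trace tβ tβ' lam
    have hhl : h lam = (seg β β' lam * matLog (seg β β' lam)).trace.re := rfl
    have hc' : c = (β' * matLog β').trace.re := rfl
    have hgl : g lam = ((β - β') * matLog (seg β β' lam)).trace.re := rfl
    -- lower bound via Klein with ρ = seg, σ = β'
    have low := klein hPSD hβ' (hkerseg lam)
    rw [tseg, tβ', sub_self, Matrix.mul_sub, Matrix.trace_sub, Complex.sub_re] at low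
    have hexp : (seg β β' lam * matLog β').trace.re
        = lam * (β * matLog β').trace.re + (1 - lam) * (β' * matLog β').trace.re :=
      seg_mul_trace_re β β' (matLog β') lam
    have hg0' : g 0 = (β * matLog β').trace.re - (β' * matLog β').trace.re := by
      rw [hg0, sub_mul_trace_re]
    -- upper bound via Klein with ρ = β', σ = seg
    have hup := klein hβ' hPSD (seg_ker hβ hβ' hpos.le (by linarith))
    rw [tseg, tβ', sub_self, Matrix.mul_sub, Matrix.trace_sub, Complex.sub_re] at hup
    have hexp2 : (seg β β' lam * matLog (seg β β' lam)).trace.re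
        = lam * (β * matLog (seg β β' lam)).trace.re
          + (1 - lam) * (β' * matLog (seg β β' lam)).trace.re :=
      seg_mul_trace_re β β' (matLog (seg β β' lam)) lam
    have hglam : g lam = (β * matLog (seg β β' lam)).trace.re
        - (β' * matLog (seg β β' lam)).trace.re := by
      rw [hgl, sub_mul_trace_re]
    constructor
    · calc lam * g 0
          = lam * (β * matLog β').trace.re + (1 - lam) * (β' * matLog β').trace.re
            - (β' * matLog β').trace.re := by rw [hg0']; ring
        _ ≤ h lam - c := by rw [hhl, hc']; linarith [low, hexp]
    · calc h lam - c
          ≤ (seg β β' lam * matLog (seg β β' lam)).trace.re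
            - (β' * matLog (seg β β' lam)).trace.re := by rw [hhl, hc']; linarith [hup]
        _ = lam * (β * matLog (seg β β' lam)).trace.re
            - lam * (β' * matLog (seg β β' lam)).trace.re := by rw [hexp2]; ring
        _ = lam * g lam := by rw [hglam]; ring
  -- now the limit
  rw [Metric.tendsto_nhds]
  intro ε hε
  obtain ⟨a, ha, ha1, hbd⟩ := exists_min_pos_eigenvalue hβ' tβ'
  obtain ⟨p, hp0, hp1⟩ := exists_good_poly ha ha1 (show (0:ℝ) < ε/6 by linarith)
  set P : ℝ → ℝ := fun lam => (((β - β') * Polynomial.aeval (seg β β' lam) p).trace.re) with hP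
  have hgP : ∀ lam, 0 ≤ lam → lam ≤ 1/2 → |g lam - P lam| ≤ ε/3 := by
    intro lam h0 hhalf
    have hPSD : (seg β β' lam).PosSemidef := seg_posSemidef hβ hβ' h0 (by linarith)
    have hspec : ∀ j, |Real.log (hPSD.1.eigenvalues j) - p.eval (hPSD.1.eigenvalues j)| ≤ ε/6 := by
      intro j
      rcases seg_eigenvalue_bound hβ hβ' tβ tβ' hs hbd h0 hhalf hPSD j with hq | ⟨hq1, hq2⟩
      · rw [hq, Real.log_zero, zero_sub, abs_neg]
        exact (hp0).le
      · exact (hp1 _ hq1 hq2).le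
    have hB : ∑ j, |(((eV hPSD.1)ᴴ * (β - β') * eV hPSD.1) j j).re| ≤ 2 :=
      diag_abs_sum_le hβ hβ' tβ tβ' (eV_mul_conj hPSD.1)
    have := approx_bound (Δ := β - β') hPSD.1 p (by linarith) hspec hB
    calc |g lam - P lam| ≤ (ε/6) * 2 := this
      _ = ε/3 := by ring
  have hPtend : Filter.Tendsto P (nhdsWithin 0 (Set.Icc (0:ℝ) 1 \ {0})) (nhds (P 0)) :=
    ((cont_P (β - β') β β' p).tendsto 0).mono_left nhdsWithin_le_nhds
  have hev2 := (Metric.tendsto_nhds.mp hPtend) (ε/6) (by linarith)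
  have hev1 : ∀ᶠ lam in nhdsWithin 0 (Set.Icc (0:ℝ) 1 \ {0}),
      lam ∈ Set.Icc (0:ℝ) 1 \ {0} := eventually_mem_nhdsWithin
  have hev3 : ∀ᶠ lam in nhdsWithin 0 (Set.Icc (0:ℝ) 1 \ {0}), lam < 1/2 :=
    (eventually_lt_nhds (by norm_num : (0:ℝ) < 1/2)).filter_mono nhdsWithin_le_nhds
  filter_upwards [hev1, hev2, hev3] with lam hS hP2 h3
  have hne : lam ≠ 0 := by
    intro hz
    exact hS.2 (by simp [hz])
  have hpos : 0 < lam := lt_of_le_of_ne hS.1.1 (Ne.symm hne)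
  obtain ⟨hlow, hup⟩ := sandwich lam hpos h3.le
  have hslow : g 0 ≤ (h lam - c)/lam := by
    rw [le_div_iff₀ hpos]
    linarith
  have hsup : (h lam - c)/lam ≤ g lam := by
    rw [div_le_iff₀ hpos]
    linarith
  have e1 : |g lam - P lam| ≤ ε/3 := hgP lam hpos.le h3.le
  have e0 : |g 0 - P 0| ≤ ε/3 := hgP 0 le_rfl (by norm_num)
  rw [Real.dist_eq] at hP2 ⊢
  have hhl : (seg β β' lam * matLog (seg β β' lam)).trace.re = h lam := rfl
  rw [hhl]
  rw [hg0] at hslow e0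
  have habs : |(h lam - c)/lam - ((β - β') * matLog β').trace.re| ≤
      |g lam - ((β - β') * matLog β').trace.re| := by
    rw [abs_of_nonneg (by linarith)]
    calc (h lam - c)/lam - ((β - β') * matLog β').trace.re
        ≤ g lam - ((β - β') * matLog β').trace.re := by linarith
      _ ≤ |g lam - ((β - β') * matLog β').trace.re| := le_abs_self _
  have htri : |g lam - ((β - β') * matLog β').trace.re|
      ≤ |g lam - P lam| + |P lam - P 0| + |P 0 - ((β - β') * matLog β').trace.re| := by
    calc |g lam - ((β - β') * matLog β').trace.re|
        ≤ |g lam - P lam| + |P lam - ((β - β') * matLog β').trace.re| := abs_sub_le _ _ _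
      _ ≤ |g lam - P lam| + (|P lam - P 0| + |P 0 - ((β - β') * matLog β').trace.re|) :=
          add_le_add_right (abs_sub_le _ _ _) _
      _ = _ := by ring
  have e0' : |P 0 - ((β - β') * matLog β').trace.re| ≤ ε/3 := by
    rw [abs_sub_comm]; exact e0
  calc |(h lam - c)/lam - ((β - β') * matLog β').trace.re|
      ≤ |g lam - P lam| + |P lam - P 0| + |P 0 - ((β - β') * matLog β').trace.re| :=
        le_trans habs htri
    _ < ε/3 + ε/6 + ε/3 := by
        have := hP2
        linarith [e1, e0']
    _ < ε := by linarith

end Aux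

namespace Aux

set_option linter.unusedSectionVars false

section Channels

variable {α β : Type*} [Fintype α] [Fintype β] [DecidableEq α] [DecidableEq β]

theorem ptraceSnd_trace (M : Matrix (α × β) (α × β) ℂ) : (ptraceSnd M).trace = M.trace := by
  simp [Matrix.trace, Matrix.diag, ptraceSnd, Fintype.sum_prod_type]

theorem ptraceFst_trace (M : Matrix (α × β) (α × β) ℂ) : (ptraceFst M).trace = M.trace := by
  simp only [Matrix.trace, Matrix.diag, ptraceFst, Matrix.of_apply, Fintype.sum_prod_type]
  rw [Finset.sum_comm]


theorem dotk (M : Matrix (α × β) (α × β) ℂ) (x : α → ℂ) (k : β) :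
    star (fun il : α × β => if il.2 = k then x il.1 else 0) ⬝ᵥ
            M *ᵥ (fun il : α × β => if il.2 = k then x il.1 else 0)
    = ∑ i, ∑ j, star (x i) * (M (i,k) (j,k) * x j) := by
  simp only [dotProduct, Matrix.mulVec, Pi.star_apply, Fintype.sum_prod_type,
    Matrix.of_apply]
  simp only [apply_ite (star : ℂ → ℂ), star_zero, ite_mul, zero_mul, mul_ite, mul_zero]
  simp only [Finset.sum_ite_irrel, Finset.sum_const_zero, Finset.sum_ite_eq', Finset.mem_univ, if_true]
  refine Finset.sum_congr rfl fun i _ => ?_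
  rw [Finset.mul_sum]

theorem snd_decomp (M : Matrix (α × β) (α × β) ℂ) (x : α → ℂ) :
    star x ⬝ᵥ ptraceSnd M *ᵥ x
        = ∑ k : β, star (fun il : α × β => if il.2 = k then x il.1 else 0) ⬝ᵥ
            M *ᵥ (fun il : α × β => if il.2 = k then x il.1 else 0) := by
  have h1 : star x ⬝ᵥ ptraceSnd M *ᵥ x
      = ∑ i, ∑ j, ∑ k, star (x i) * (M (i,k) (j,k) * x j) := by
    simp only [dotProduct, Matrix.mulVec, ptraceSnd, Matrix.of_apply, Pi.star_apply]
    refine Finset.sum_congr rfl fun i _ => ?_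
    rw [Finset.mul_sum]
    refine Finset.sum_congr rfl fun j _ => ?_
    rw [Finset.sum_mul, Finset.mul_sum]
  rw [h1]
  have h2 : ∀ i : α, ∑ j, ∑ k, star (x i) * (M (i,k) (j,k) * x j)
      = ∑ k, ∑ j, star (x i) * (M (i,k) (j,k) * x j) := fun i => Finset.sum_comm
  rw [Finset.sum_congr rfl fun i _ => h2 i, Finset.sum_comm]
  refine Finset.sum_congr rfl fun k _ => ?_
  rw [dotk]

theorem dotkF (M : Matrix (α × β) (α × β) ℂ) (x : β → ℂ) (k : α) :
    star (fun il : α × β => if il.1 = k then x il.2 else 0) ⬝ᵥ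
            M *ᵥ (fun il : α × β => if il.1 = k then x il.2 else 0)
    = ∑ i, ∑ j, star (x i) * (M (k,i) (k,j) * x j) := by
  simp only [dotProduct, Matrix.mulVec, Pi.star_apply, Fintype.sum_prod_type,
    Matrix.of_apply]
  simp only [apply_ite (star : ℂ → ℂ), star_zero, ite_mul, zero_mul, mul_ite, mul_zero]
  simp only [Finset.sum_ite_irrel, Finset.sum_const_zero, Finset.sum_ite_eq', Finset.mem_univ, if_true]
  refine Finset.sum_congr rfl fun i _ => ?_
  rw [Finset.mul_sum]

theorem fst_decomp (M : Matrix (α × β) (α × β) ℂ) (x : β → ℂ) :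
    star x ⬝ᵥ ptraceFst M *ᵥ x
        = ∑ k : α, star (fun il : α × β => if il.1 = k then x il.2 else 0) ⬝ᵥ
            M *ᵥ (fun il : α × β => if il.1 = k then x il.2 else 0) := by
  have h1 : star x ⬝ᵥ ptraceFst M *ᵥ x
      = ∑ i, ∑ j, ∑ k, star (x i) * (M (k,i) (k,j) * x j) := by
    simp only [dotProduct, Matrix.mulVec, ptraceFst, Matrix.of_apply, Pi.star_apply]
    refine Finset.sum_congr rfl fun i _ => ?_
    rw [Finset.mul_sum]
    refine Finset.sum_congr rfl fun j _ => ?_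
    rw [Finset.sum_mul, Finset.mul_sum]
  rw [h1]
  have h2 : ∀ i : β, ∑ j, ∑ k, star (x i) * (M (k,i) (k,j) * x j)
      = ∑ k, ∑ j, star (x i) * (M (k,i) (k,j) * x j) := fun i => Finset.sum_comm
  rw [Finset.sum_congr rfl fun i _ => h2 i, Finset.sum_comm]
  refine Finset.sum_congr rfl fun k _ => ?_
  rw [dotkF]


theorem ptraceSnd_posSemidef {M : Matrix (α × β) (α × β) ℂ} (hM : M.PosSemidef) :
    (ptraceSnd M).PosSemidef := by
  refine Matrix.PosSemidef.of_dotProduct_mulVec_nonneg ?_ ?_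
  · have hH := hM.1
    ext i j
    rw [Matrix.conjTranspose_apply, ptraceSnd, Matrix.of_apply, Matrix.of_apply, star_sum]
    refine Finset.sum_congr rfl fun k _ => ?_
    rw [← Matrix.conjTranspose_apply, hH]
  · intro x
    rw [snd_decomp]
    exact Finset.sum_nonneg fun k _ => hM.dotProduct_mulVec_nonneg _

theorem ptraceFst_posSemidef {M : Matrix (α × β) (α × β) ℂ} (hM : M.PosSemidef) :
    (ptraceFst M).PosSemidef := by
  refine Matrix.PosSemidef.of_dotProduct_mulVec_nonneg ?_ ?_
  · have hH := hM.1
    ext i j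
    rw [Matrix.conjTranspose_apply, ptraceFst, Matrix.of_apply, Matrix.of_apply, star_sum]
    refine Finset.sum_congr rfl fun k _ => ?_
    rw [← Matrix.conjTranspose_apply, hH]
  · intro x
    rw [fst_decomp]
    exact Finset.sum_nonneg fun k _ => hM.dotProduct_mulVec_nonneg _

theorem ptraceSnd_add (M N : Matrix (α × β) (α × β) ℂ) :
    ptraceSnd (M + N) = ptraceSnd M + ptraceSnd N := by
  ext i j
  simp [ptraceSnd, Finset.sum_add_distrib]

theorem ptraceSnd_smul (c : ℂ) (M : Matrix (α × β) (α × β) ℂ) :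
    ptraceSnd (c • M) = c • ptraceSnd M := by
  ext i j
  simp [ptraceSnd, Finset.mul_sum]

theorem ptraceFst_add (M N : Matrix (α × β) (α × β) ℂ) :
    ptraceFst (M + N) = ptraceFst M + ptraceFst N := by
  ext i j
  simp [ptraceFst, Finset.sum_add_distrib]

theorem ptraceFst_smul (c : ℂ) (M : Matrix (α × β) (α × β) ℂ) :
    ptraceFst (c • M) = c • ptraceFst M := by
  ext i j
  simp [ptraceFst, Finset.mul_sum]

end Channels

section Chan

variable {dA dB dE : ℕ}

theorem chanB_posSemidef (U : Matrix (Fin dB × Fin dE) (Fin dA) ℂ)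
    {ρ : Matrix (Fin dA) (Fin dA) ℂ} (hρ : ρ.PosSemidef) : (chanB U ρ).PosSemidef :=
  ptraceSnd_posSemidef (hρ.mul_mul_conjTranspose_same U)

theorem chanE_posSemidef (U : Matrix (Fin dB × Fin dE) (Fin dA) ℂ)
    {ρ : Matrix (Fin dA) (Fin dA) ℂ} (hρ : ρ.PosSemidef) : (chanE U ρ).PosSemidef :=
  ptraceFst_posSemidef (hρ.mul_mul_conjTranspose_same U)

theorem chanB_trace (U : Matrix (Fin dB × Fin dE) (Fin dA) ℂ) (hU : Uᴴ * U = 1)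
    (ρ : Matrix (Fin dA) (Fin dA) ℂ) : (chanB U ρ).trace = ρ.trace := by
  rw [chanB, ptraceSnd_trace, Matrix.trace_mul_cycle, hU, one_mul]

theorem chanE_trace (U : Matrix (Fin dB × Fin dE) (Fin dA) ℂ) (hU : Uᴴ * U = 1)
    (ρ : Matrix (Fin dA) (Fin dA) ℂ) : (chanE U ρ).trace = ρ.trace := by
  rw [chanE, ptraceFst_trace, Matrix.trace_mul_cycle, hU, one_mul]

theorem chanB_linear (U : Matrix (Fin dB × Fin dE) (Fin dA) ℂ) (a b : ℂ)
    (ρ ρ' : Matrix (Fin dA) (Fin dA) ℂ) :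
    chanB U (a • ρ + b • ρ') = a • chanB U ρ + b • chanB U ρ' := by
  rw [chanB, chanB, chanB, show U * (a • ρ + b • ρ') * Uᴴ
      = a • (U * ρ * Uᴴ) + b • (U * ρ' * Uᴴ) by
    rw [Matrix.mul_add, Matrix.add_mul, Matrix.mul_smul, Matrix.smul_mul, Matrix.mul_smul,
      Matrix.smul_mul], ptraceSnd_add, ptraceSnd_smul, ptraceSnd_smul]

theorem chanE_linear (U : Matrix (Fin dB × Fin dE) (Fin dA) ℂ) (a b : ℂ)
    (ρ ρ' : Matrix (Fin dA) (Fin dA) ℂ) :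
    chanE U (a • ρ + b • ρ') = a • chanE U ρ + b • chanE U ρ' := by
  rw [chanE, chanE, chanE, show U * (a • ρ + b • ρ') * Uᴴ
      = a • (U * ρ * Uᴴ) + b • (U * ρ' * Uᴴ) by
    rw [Matrix.mul_add, Matrix.add_mul, Matrix.mul_smul, Matrix.smul_mul, Matrix.mul_smul,
      Matrix.smul_mul], ptraceFst_add, ptraceFst_smul, ptraceFst_smul]

end Chan

end Aux

namespace Aux

set_option linter.unusedSectionVars false

theorem relEntropy_expand {n : Type*} [Fintype n] [DecidableEq n] (X Y : Matrix n n ℂ) :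
    relEntropy X Y = (X * matLog X).trace.re - (X * matLog Y).trace.re := by
  rw [relEntropy, Matrix.mul_sub, Matrix.trace_sub, Complex.sub_re]

theorem relEntropy_self {n : Type*} [Fintype n] [DecidableEq n] (X : Matrix n n ℂ) :
    relEntropy X X = 0 := by
  rw [relEntropy, sub_self, Matrix.mul_zero, Matrix.trace_zero, Complex.zero_re]

end Aux

open Aux in
theorem divergence_difference_right_derivative_at_zero'
    {dA dB dE : ℕ} (hdA : 1 ≤ dA) (hdB : 1 ≤ dB) (hdE : 1 ≤ dE)
    (U : Matrix (Fin dB × Fin dE) (Fin dA) ℂ) (hU : Uᴴ * U = 1)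
    (ρ ρhat : Matrix (Fin dA) (Fin dA) ℂ) (hρ : IsState ρ) (hρhat : IsState ρhat)
    (hsB : suppLE (chanB U ρ) (chanB U ρhat)) (hsE : suppLE (chanE U ρ) (chanE U ρhat))
    (f : ℝ → ℝ)
    (hf : ∀ lam ∈ Set.Icc (0 : ℝ) 1, f lam =
      (lam * relEntropy (chanB U ρ) (chanB U ((lam : ℂ) • ρ + (1 - (lam : ℂ)) • ρhat))
        + (1 - lam) *
          relEntropy (chanB U ρhat) (chanB U ((lam : ℂ) • ρ + (1 - (lam : ℂ)) • ρhat)))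
      - (lam * relEntropy (chanE U ρ) (chanE U ((lam : ℂ) • ρ + (1 - (lam : ℂ)) • ρhat))
        + (1 - lam) *
          relEntropy (chanE U ρhat) (chanE U ((lam : ℂ) • ρ + (1 - (lam : ℂ)) • ρhat)))) :
    f 0 = 0 ∧ HasDerivWithinAt f
      (relEntropy (chanB U ρ) (chanB U ρhat) - relEntropy (chanE U ρ) (chanE U ρhat))
      (Set.Icc (0 : ℝ) 1) 0 := by
  -- channel output states
  have pB : (chanB U ρ).PosSemidef := chanB_posSemidef U hρ.1
  have pB' : (chanB U ρhat).PosSemidef := chanB_posSemidef U hρhat.1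
  have pE : (chanE U ρ).PosSemidef := chanE_posSemidef U hρ.1
  have pE' : (chanE U ρhat).PosSemidef := chanE_posSemidef U hρhat.1
  have tB : (chanB U ρ).trace = 1 := by rw [chanB_trace U hU, hρ.2]
  have tB' : (chanB U ρhat).trace = 1 := by rw [chanB_trace U hU, hρhat.2]
  have tE : (chanE U ρ).trace = 1 := by rw [chanE_trace U hU, hρ.2]
  have tE' : (chanE U ρhat).trace = 1 := by rw [chanE_trace U hU, hρhat.2]
  -- the channel images of the segment
  have hmixB : ∀ lam : ℝ, chanB U ((lam : ℂ) • ρ + (1 - (lam : ℂ)) • ρhat)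
      = seg (chanB U ρ) (chanB U ρhat) lam := by
    intro lam
    rw [chanB_linear]
    rfl
  have hmixE : ∀ lam : ℝ, chanE U ((lam : ℂ) • ρ + (1 - (lam : ℂ)) • ρhat)
      = seg (chanE U ρ) (chanE U ρhat) lam := by
    intro lam
    rw [chanE_linear]
    rfl
  -- value at zero
  have hf0 : f 0 = 0 := by
    have h := hf 0 (by constructor <;> norm_num)
    have hz : ((0:ℝ) : ℂ) • ρ + (1 - ((0:ℝ) : ℂ)) • ρhat = ρhat := by
      simp
    rw [hz] at h
    rw [h, relEntropy_self, relEntropy_self]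
    ring
  refine ⟨hf0, ?_⟩
  rw [hasDerivWithinAt_iff_tendsto_slope]
  -- core limits for both channels
  have coreB := core_tendsto pB pB' tB tB' hsB
  have coreE := core_tendsto pE pE' tE tE' hsE
  set KB : ℝ := (chanB U ρ * matLog (chanB U ρ)).trace.re
    - (chanB U ρhat * matLog (chanB U ρhat)).trace.re with hKB
  set KE : ℝ := (chanE U ρ * matLog (chanE U ρ)).trace.re
    - (chanE U ρhat * matLog (chanE U ρhat)).trace.re with hKE
  have combined := (Filter.Tendsto.sub (tendsto_const_nhds (x := KB)) coreB).sub
    ((Filter.Tendsto.sub (tendsto_const_nhds (x := KE)) coreE))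
  have hval : KB - ((chanB U ρ - chanB U ρhat) * matLog (chanB U ρhat)).trace.re
      - (KE - ((chanE U ρ - chanE U ρhat) * matLog (chanE U ρhat)).trace.re)
      = relEntropy (chanB U ρ) (chanB U ρhat) - relEntropy (chanE U ρ) (chanE U ρhat) := by
    rw [hKB, hKE, sub_mul_trace_re, sub_mul_trace_re, relEntropy_expand, relEntropy_expand]
    ring
  rw [show (0:ℝ) = (0:ℝ) from rfl, ← hval]
  refine Filter.Tendsto.congr' ?_ combined
  filter_upwards [eventually_mem_nhdsWithin] with lam hS
  obtain ⟨hIcc, hne0⟩ := hS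
  have hne : lam ≠ 0 := by simpa using hne0
  -- unfold the slope
  have hflam := hf lam hIcc
  rw [hmixB, hmixE] at hflam
  have eB : lam * relEntropy (chanB U ρ) (seg (chanB U ρ) (chanB U ρhat) lam)
      + (1 - lam) * relEntropy (chanB U ρhat) (seg (chanB U ρ) (chanB U ρhat) lam)
      = lam * (chanB U ρ * matLog (chanB U ρ)).trace.re
        + (1 - lam) * (chanB U ρhat * matLog (chanB U ρhat)).trace.re
        - (seg (chanB U ρ) (chanB U ρhat) lam
            * matLog (seg (chanB U ρ) (chanB U ρhat) lam)).trace.re := by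
    rw [relEntropy_expand, relEntropy_expand,
      seg_mul_trace_re _ _ (matLog (seg (chanB U ρ) (chanB U ρhat) lam))]
    ring
  have eE : lam * relEntropy (chanE U ρ) (seg (chanE U ρ) (chanE U ρhat) lam)
      + (1 - lam) * relEntropy (chanE U ρhat) (seg (chanE U ρ) (chanE U ρhat) lam)
      = lam * (chanE U ρ * matLog (chanE U ρ)).trace.re
        + (1 - lam) * (chanE U ρhat * matLog (chanE U ρhat)).trace.re
        - (seg (chanE U ρ) (chanE U ρhat) lam
            * matLog (seg (chanE U ρ) (chanE U ρhat) lam)).trace.re := by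
    rw [relEntropy_expand, relEntropy_expand,
      seg_mul_trace_re _ _ (matLog (seg (chanE U ρ) (chanE U ρhat) lam))]
    ring
  rw [eB, eE] at hflam
  rw [slope_def_field, hf0, sub_zero, sub_zero, hflam, hKB, hKE]
  field_simp
  ring

/-- Along the segment `ρ̄_λ = λρ + (1-λ)ρ̂`, the function
`f(λ) = [λ D(N_B(ρ)‖N_B(ρ̄_λ)) + (1-λ) D(N_B(ρ̂)‖N_B(ρ̄_λ))]
      - [λ D(N_E(ρ)‖N_E(ρ̄_λ)) + (1-λ) D(N_E(ρ̂)‖N_E(ρ̄_λ))]`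
satisfies `f(0) = 0` and is right-differentiable at `0` with derivative
`f′(0) = D(N_B(ρ)‖N_B(ρ̂)) − D(N_E(ρ)‖N_E(ρ̂))`. -/
theorem divergence_difference_right_derivative_at_zero
    {dA dB dE : ℕ} (hdA : 1 ≤ dA) (hdB : 1 ≤ dB) (hdE : 1 ≤ dE)
    (U : Matrix (Fin dB × Fin dE) (Fin dA) ℂ) (hU : Uᴴ * U = 1)
    (ρ ρhat : Matrix (Fin dA) (Fin dA) ℂ) (hρ : IsState ρ) (hρhat : IsState ρhat)
    (hsB : suppLE (chanB U ρ) (chanB U ρhat)) (hsE : suppLE (chanE U ρ) (chanE U ρhat))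
    (f : ℝ → ℝ)
    (hf : ∀ lam ∈ Set.Icc (0 : ℝ) 1, f lam =
      (lam * relEntropy (chanB U ρ) (chanB U ((lam : ℂ) • ρ + (1 - (lam : ℂ)) • ρhat))
        + (1 - lam) *
          relEntropy (chanB U ρhat) (chanB U ((lam : ℂ) • ρ + (1 - (lam : ℂ)) • ρhat)))
      - (lam * relEntropy (chanE U ρ) (chanE U ((lam : ℂ) • ρ + (1 - (lam : ℂ)) • ρhat))
        + (1 - lam) *
          relEntropy (chanE U ρhat) (chanE U ((lam : ℂ) • ρ + (1 - (lam : ℂ)) • ρhat)))) :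
    f 0 = 0 ∧ HasDerivWithinAt f
      (relEntropy (chanB U ρ) (chanB U ρhat) - relEntropy (chanE U ρ) (chanE U ρhat))
      (Set.Icc (0 : ℝ) 1) 0 := by
  exact divergence_difference_right_derivative_at_zero' hdA hdB hdE U hU ρ ρhat hρ hρhat hsB hsE f hf

end
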